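/- Let K = {x ∈ {0,1}^n : aᵀx ≤ b} be a knapsack set with a a vector of n nonnegative integers and b a nonnegative integer. Let Q ⊆ {1,…,n} be nonempty, let t ∈ {1,…,n} \ Q, and let k be a positive integer with k ≤ |Q|. Assume Σ_{i∈Q} a_i ≤ b and that for every H ⊆ Q with |H| = k, the set H ∪ {t} is a minimal cover for K. Then for every integer r with k ≤ r ≤ |Q| and every T ⊆ Q with |T| = r, the (1,k)-configuration inequality (r − k + 1)·x_t + Σ_{j∈T} x_j ≤ r is valid for K: every x ∈ {0,1}^n with aᵀx ≤ b satisfies it. -/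

import Mathlib

open Finset

/-- `S₁` dominates `S₂`: there is an injection `f : S₂ → S₁` with `f i ≤ i`. -/
def Dominates {n : ℕ} (S₁ S₂ : Finset (Fin n)) : Prop :=
  ∃ f : Fin n → Fin n, Set.InjOn f (S₂ : Set (Fin n)) ∧ ∀ i ∈ S₂, f i ∈ S₁ ∧ f i ≤ i

/-- Columns of `A` are componentwise non-increasing. -/
def ColsOrdered {m n : ℕ} (A : Fin m → Fin n → ℕ) : Prop :=
  ∀ j : Fin m, ∀ i i' : Fin n, i ≤ i' → A j i' ≤ A j i

/-- `S` is a cover for the multiple knapsack set given by `A, b`. -/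
def IsCover {m n : ℕ} (A : Fin m → Fin n → ℕ) (b : Fin m → ℕ) (S : Finset (Fin n)) : Prop :=
  ∃ j : Fin m, b j < ∑ i ∈ S, A j i

/-- Minimal cover: a cover none of whose proper subsets is a cover. -/
def IsMinimalCover {m n : ℕ} (A : Fin m → Fin n → ℕ) (b : Fin m → ℕ)
    (S : Finset (Fin n)) : Prop :=
  IsCover A b S ∧ ∀ S' ⊂ S, ¬ IsCover A b S'

/-- The union `C = ∪ₕ Cₕ`. -/
def unionC {n k : ℕ} (C : Fin k → Finset (Fin n)) : Finset (Fin n) :=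
  Finset.univ.sup C

/-- The intersection `C₀ = ∩ₕ Cₕ`. -/
def interC {n k : ℕ} (C : Fin k → Finset (Fin n)) : Finset (Fin n) :=
  Finset.univ.inf C

/-- `{C₁,…,C_k}` is a multi-cover for the TOMKS given by `A, b`. -/
def MultiCover {m n k : ℕ} (A : Fin m → Fin n → ℕ) (b : Fin m → ℕ)
    (C : Fin k → Finset (Fin n)) : Prop :=
  (∀ h, IsCover A b (C h)) ∧
  ∀ T ⊆ unionC C \ interC C, (∀ h, T ≠ C h \ interC C) →
    ∃ h, Dominates T (C h \ interC C) ∨ Dominates (C h \ interC C) T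

/-- Max of `g` over `S`, with the empty maximum taken to be `0`. -/
def fmax {ι : Type*} (S : Finset ι) (g : ι → ℤ) : ℤ :=
  if h : S.Nonempty then S.sup' h g else 0

/-- Min of `g` over `S`, with the empty minimum taken to be `0`. -/
def fmin {ι : Type*} (S : Finset ι) (g : ι → ℤ) : ℤ :=
  if h : S.Nonempty then S.inf' h g else 0

/-- `α` is an MCI coefficient vector for the family of covers `C`. -/
def IsMCICoeff {n k : ℕ} (C : Fin k → Finset (Fin n)) (α : Fin n → ℤ) : Prop :=
  (∀ i, i ∉ unionC C → α i = 0) ∧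
  (∀ i ∈ unionC C \ interC C, (∀ j ∈ unionC C \ interC C, j ≤ i) → α i = 1) ∧
  (∀ i ∈ unionC C \ interC C, (∃ j ∈ unionC C \ interC C, i < j) →
    ∀ h : Fin k, i ∈ C h →
      1 + fmax ((unionC C \ C h).filter (fun ℓ => i < ℓ)) α ≤ α i) ∧
  (∀ j ∈ interC C, ∃ h : Fin k,
    max (fmax ((unionC C \ C h).filter (fun ℓ => ℓ < j)) α)
        (1 + ∑ ℓ ∈ (unionC C \ C h).filter (fun ℓ => j < ℓ), α ℓ) ≤ α j)

/-- `α` is the S-MCI coefficient vector for the family of covers `C`. -/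
def IsSMCICoeff {n k : ℕ} (C : Fin k → Finset (Fin n)) (α : Fin n → ℤ) : Prop :=
  (∀ i, i ∉ unionC C → α i = 0) ∧
  (∀ i ∈ unionC C \ interC C,
    α i = 1 + fmax (Finset.univ.filter (fun h : Fin k => i ∈ C h))
        (fun h => fmax ((unionC C \ C h).filter (fun ℓ => i < ℓ)) α)) ∧
  (∀ j ∈ interC C,
    α j = fmin (Finset.univ : Finset (Fin k))
        (fun h => max (fmax ((unionC C \ C h).filter (fun ℓ => ℓ < j)) α)
            (1 + ∑ ℓ ∈ (unionC C \ C h).filter (fun ℓ => j < ℓ), α ℓ)))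

/-- Second-smallest value of the multiset `{α i : i ∈ D}` (for `|D| ≥ 2`). -/
def secondMin {n : ℕ} (α : Fin n → ℤ) (D : Finset (Fin n)) : ℤ :=
  fmax D (fun j => fmin (D.erase j) α)

/-- `πᵀ x ≤ 1` is a non-trivial facet-defining inequality for `conv(K)`. -/
def IsNontrivialFacet {m n : ℕ} (A : Fin m → Fin n → ℕ) (b : Fin m → ℕ)
    (pv : Fin n → ℝ) : Prop :=
  (∀ i, 0 ≤ pv i) ∧
  (∃ i j : Fin n, i ≠ j ∧ pv i ≠ 0 ∧ pv j ≠ 0) ∧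
  (∀ x : Fin n → ℝ, (∀ i, x i = 0 ∨ x i = 1) →
    (∀ j, ∑ i, (A j i : ℝ) * x i ≤ (b j : ℝ)) → ∑ i, pv i * x i ≤ 1) ∧
  (∃ pts : Fin n → (Fin n → ℝ), AffineIndependent ℝ pts ∧
    ∀ ℓ, (∀ i, pts ℓ i = 0 ∨ pts ℓ i = 1) ∧
      (∀ j, ∑ i, (A j i : ℝ) * pts ℓ i ≤ (b j : ℝ)) ∧
      ∑ i, pv i * pts ℓ i = 1)

/-- `S` is a cover for the single knapsack set given by `a, b`. -/
def IsCoverK {n : ℕ} (a : Fin n → ℕ) (b : ℕ) (S : Finset (Fin n)) : Prop :=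
  b < ∑ i ∈ S, a i

/-- Minimal cover for a single knapsack set. -/
def IsMinimalCoverK {n : ℕ} (a : Fin n → ℕ) (b : ℕ) (S : Finset (Fin n)) : Prop :=
  IsCoverK a b S ∧ ∀ S' ⊂ S, ¬ IsCoverK a b S'

/-- validity of the `(1,k)`-configuration inequality for a knapsack set. -/
theorem one_k_configuration_valid {n : ℕ} (a : Fin n → ℕ) (b : ℕ)
    (Q : Finset (Fin n)) (hQ : Q.Nonempty) (t : Fin n) (ht : t ∉ Q)
    (k : ℕ) (hk : 1 ≤ k) (hkQ : k ≤ Q.card)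
    (hQb : ∑ i ∈ Q, a i ≤ b)
    (hH : ∀ H ⊆ Q, H.card = k → IsMinimalCoverK a b (insert t H))
    (r : ℕ) (hr1 : k ≤ r) (hr2 : r ≤ Q.card)
    (T : Finset (Fin n)) (hTQ : T ⊆ Q) (hT : T.card = r)
    (x : Fin n → ℤ) (hx : ∀ i, x i = 0 ∨ x i = 1)
    (hfeas : ∑ i, (a i : ℤ) * x i ≤ (b : ℤ)) :
    ((r : ℤ) - (k : ℤ) + 1) * x t + ∑ j ∈ T, x j ≤ (r : ℤ) := by
  set S : Finset (Fin n) := T.filter (fun j => x j = 1) with hS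
  have hsub : S ⊆ T := Finset.filter_subset _ _
  have hsumS : ∑ j ∈ T, x j = S.card := by
    rw [← Finset.sum_subset hsub (fun j hjT hjS => by
      rcases hx j with h | h
      · exact h
      · exact absurd (Finset.mem_filter.mpr ⟨hjT, h⟩) hjS)]
    rw [Finset.sum_congr rfl (fun j hj => (Finset.mem_filter.mp hj).2)]
    simp
    rfl
  have hScard : S.card ≤ r := hT ▸ Finset.card_le_card hsub
  rcases hx t with hxt | hxt
  · rw [hxt, hsumS]
    have : (S.card : ℤ) ≤ (r : ℤ) := by exact_mod_cast hScard
    linarith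
  · -- x t = 1; show S.card < k
    have hSk : S.card < k := by
      by_contra hcon
      push_neg at hcon
      obtain ⟨H, hHS, hHcard⟩ := Finset.exists_subset_card_eq hcon
      have hHQ : H ⊆ Q := fun i hi => hTQ (hsub (hHS hi))
      have hcover : IsCoverK a b (insert t H) := (hH H hHQ hHcard).1
      have htH : t ∉ H := fun h => ht (hHQ h)
      have hones : ∀ i ∈ insert t H, x i = 1 := by
        intro i hi
        rcases Finset.mem_insert.mp hi with rfl | hi
        · exact hxt
        · exact (Finset.mem_filter.mp (hHS hi)).2
      have hle : ∑ i ∈ insert t H, (a i : ℤ) ≤ ∑ i, (a i : ℤ) * x i := by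
        calc ∑ i ∈ insert t H, (a i : ℤ)
            = ∑ i ∈ insert t H, (a i : ℤ) * x i := by
              refine Finset.sum_congr rfl fun i hi => ?_
              rw [hones i hi, mul_one]
          _ ≤ ∑ i, (a i : ℤ) * x i := by
              refine Finset.sum_le_sum_of_subset_of_nonneg (Finset.subset_univ _)
                fun i _ _ => ?_
              rcases hx i with h | h <;> simp [h] <;> positivity
      have hb : (b : ℤ) < ∑ i ∈ insert t H, (a i : ℤ) := by
        have := hcover
        unfold IsCoverK at this
        exact_mod_cast this
      linarith
    rw [hxt, hsumS]
    have h1 : (S.card : ℤ) ≤ (k : ℤ) - 1 := by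
      have : S.card + 1 ≤ k := hSk
      exact_mod_cast by omega
    have h2 : (k : ℤ) ≤ (r : ℤ) := by exact_mod_cast hr1
    linarith
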